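/- The geometric mean of Hermitian positive definite matrices is congruence invariant: for any invertible matrix M, G(M* A M, M* B M) = M* G(A,B) M. -/

import Mathlib

open Matrix
open scoped ComplexOrder

/-- The unique Hermitian positive semidefinite square root of a positive semidefinite
matrix (junk value `0` if the matrix is not positive semidefinite). For a Hermitian
positive definite matrix this is the unique Hermitian positive definite square root. -/
noncomputable def matSqrt {m : ℕ} (A : Matrix (Fin m) (Fin m) ℂ) : Matrix (Fin m) (Fin m) ℂ :=
  letI := Classical.dec A.PosSemidef
  if h : A.PosSemidef then
    (h.1.eigenvectorUnitary : Matrix (Fin m) (Fin m) ℂ) *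
      diagonal ((↑) ∘ Real.sqrt ∘ h.1.eigenvalues) *
      (star h.1.eigenvectorUnitary : Matrix (Fin m) (Fin m) ℂ)
  else 0

/-- The geometric mean `G(A,B) = A^{1/2} (A^{-1/2} B A^{-1/2})^{1/2} A^{1/2}`
of two Hermitian positive definite matrices. -/
noncomputable def geoMean {m : ℕ} (A B : Matrix (Fin m) (Fin m) ℂ) : Matrix (Fin m) (Fin m) ℂ :=
  matSqrt A * matSqrt ((matSqrt A)⁻¹ * B * (matSqrt A)⁻¹) * matSqrt A

open scoped MatrixOrder

lemma matSqrt_eq {m : ℕ} {A : Matrix (Fin m) (Fin m) ℂ} (h : A.PosSemidef) :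
    matSqrt A = CFC.sqrt A := by
  rw [CFC.sqrt_eq_real_sqrt A h.nonneg, cfcₙ_eq_cfc, h.1.cfc_eq, IsHermitian.cfc,
    Unitary.conjStarAlgAut_apply]
  unfold matSqrt
  exact dif_pos h

lemma matSqrt_posSemidef {m : ℕ} {A : Matrix (Fin m) (Fin m) ℂ} (h : A.PosSemidef) :
    (matSqrt A).PosSemidef := by
  rw [matSqrt_eq h]; exact (CFC.sqrt_nonneg A).posSemidef

lemma matSqrt_mul_self {m : ℕ} {A : Matrix (Fin m) (Fin m) ℂ} (h : A.PosSemidef) :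
    matSqrt A * matSqrt A = A := by
  rw [matSqrt_eq h]; exact CFC.sqrt_mul_sqrt_self A h.nonneg

/-- A positive semidefinite matrix with unit determinant is positive definite. -/
lemma posDef_of_posSemidef_isUnit_det {m : ℕ} {S : Matrix (Fin m) (Fin m) ℂ}
    (hS : S.PosSemidef) (hdet : IsUnit S.det) : S.PosDef := by
  exact hS.posDef_iff_isUnit.mpr ((isUnit_iff_isUnit_det S).mpr hdet)

/-- Congruence preserves positive definiteness. -/
lemma posDef_conj {m : ℕ} {A : Matrix (Fin m) (Fin m) ℂ} (hA : A.PosDef)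
    (M : Matrix (Fin m) (Fin m) ℂ) (hM : IsUnit M.det) : (Mᴴ * A * M).PosDef := by
  refine posDef_of_posSemidef_isUnit_det (hA.posSemidef.conjTranspose_mul_mul_same M) ?_
  rw [det_mul, det_mul, det_conjTranspose]
  exact (hM.star.mul hA.det_pos.ne'.isUnit).mul hM

lemma matSqrt_posDef {m : ℕ} {A : Matrix (Fin m) (Fin m) ℂ} (hA : A.PosDef) :
    (matSqrt A).PosDef := by
  refine posDef_of_posSemidef_isUnit_det (matSqrt_posSemidef hA.posSemidef) ?_
  have h : IsUnit ((matSqrt A).det * (matSqrt A).det) := by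
    rw [← det_mul, matSqrt_mul_self hA.posSemidef]; exact hA.det_pos.ne'.isUnit
  exact (IsUnit.mul_iff.mp h).1

lemma matSqrt_herm {m : ℕ} {A : Matrix (Fin m) (Fin m) ℂ} (hA : A.PosSemidef) :
    (matSqrt A)ᴴ = matSqrt A := (matSqrt_posSemidef hA).isHermitian

/-- Existence: the geometric mean solves the Riccati equation `X A⁻¹ X = B`. -/
lemma geoMean_riccati {m : ℕ} {A B : Matrix (Fin m) (Fin m) ℂ}
    (hA : A.PosDef) (hB : B.PosDef) :
    geoMean A B * A⁻¹ * geoMean A B = B := by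
  set R := matSqrt A with hR
  have hRd : IsUnit R.det := (matSqrt_posDef hA).det_pos.ne'.isUnit
  have hAinv : A⁻¹ = R⁻¹ * R⁻¹ := by
    rw [← matSqrt_mul_self hA.posSemidef, Matrix.mul_inv_rev]
  have hSBS : (R⁻¹ * B * R⁻¹).PosSemidef := by
    have h := hB.posSemidef.conjTranspose_mul_mul_same (B := R⁻¹)
    rwa [conjTranspose_nonsing_inv, matSqrt_herm hA.posSemidef] at h
  have hTT : matSqrt (R⁻¹ * B * R⁻¹) * matSqrt (R⁻¹ * B * R⁻¹) = R⁻¹ * B * R⁻¹ :=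
    matSqrt_mul_self hSBS
  show R * matSqrt (R⁻¹ * B * R⁻¹) * R * A⁻¹ * (R * matSqrt (R⁻¹ * B * R⁻¹) * R) = B
  rw [hAinv]
  calc R * matSqrt (R⁻¹ * B * R⁻¹) * R * (R⁻¹ * R⁻¹) * (R * matSqrt (R⁻¹ * B * R⁻¹) * R)
      = R * ((matSqrt (R⁻¹ * B * R⁻¹) * matSqrt (R⁻¹ * B * R⁻¹)) * R) := by
        simp only [Matrix.mul_assoc, Matrix.mul_nonsing_inv_cancel_left _ _ hRd,
          Matrix.nonsing_inv_mul_cancel_left _ _ hRd]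
    _ = B := by
        rw [hTT]
        simp only [Matrix.mul_assoc, Matrix.mul_nonsing_inv_cancel_left _ _ hRd,
          Matrix.nonsing_inv_mul_cancel_left _ _ hRd,
          Matrix.mul_nonsing_inv_cancel_right _ _ hRd]
        rw [Matrix.nonsing_inv_mul _ hRd, Matrix.mul_one]

/-- Uniqueness: any positive semidefinite solution of the Riccati equation
`X A⁻¹ X = B` equals the geometric mean. -/
lemma eq_geoMean_of_riccati {m : ℕ} {A B X : Matrix (Fin m) (Fin m) ℂ}
    (hA : A.PosDef) (hB : B.PosDef) (hX : X.PosSemidef) (hXX : X * A⁻¹ * X = B) :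
    X = geoMean A B := by
  set R := matSqrt A with hR
  have hRd : IsUnit R.det := (matSqrt_posDef hA).det_pos.ne'.isUnit
  have hAinv : A⁻¹ = R⁻¹ * R⁻¹ := by
    rw [← matSqrt_mul_self hA.posSemidef, Matrix.mul_inv_rev]
  have hSh : (R⁻¹)ᴴ = R⁻¹ := by
    rw [conjTranspose_nonsing_inv, matSqrt_herm hA.posSemidef]
  have hSBS : (R⁻¹ * B * R⁻¹).PosSemidef := by
    have h := hB.posSemidef.conjTranspose_mul_mul_same (B := R⁻¹)
    rwa [hSh] at h
  have hT : (R⁻¹ * X * R⁻¹).PosSemidef := by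
    have h := hX.conjTranspose_mul_mul_same (B := R⁻¹)
    rwa [hSh] at h
  have hsq : (R⁻¹ * X * R⁻¹) ^ 2 = R⁻¹ * B * R⁻¹ := by
    rw [pow_two, ← hXX, hAinv]
    simp only [Matrix.mul_assoc]
  have hTeq : R⁻¹ * X * R⁻¹ = matSqrt (R⁻¹ * B * R⁻¹) := by
    rw [matSqrt_eq hSBS]
    exact (CFC.sqrt_unique (by rw [← hsq, pow_two]) hT.nonneg).symm
  show X = R * matSqrt (R⁻¹ * B * R⁻¹) * R
  rw [← hTeq]
  rw [Matrix.mul_assoc, Matrix.nonsing_inv_mul_cancel_right _ _ hRd,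
    Matrix.mul_nonsing_inv_cancel_left _ _ hRd]

theorem geoMean_congruence_invariant {m : ℕ} (A B M : Matrix (Fin m) (Fin m) ℂ)
    (hA : A.PosDef) (hB : B.PosDef) (hM : IsUnit M.det) :
    geoMean (Mᴴ * A * M) (Mᴴ * B * M) = Mᴴ * geoMean A B * M := by
  have hA' : (Mᴴ * A * M).PosDef := posDef_conj hA M hM
  have hB' : (Mᴴ * B * M).PosDef := posDef_conj hB M hM
  have hMH : IsUnit Mᴴ.det := by rw [det_conjTranspose]; exact hM.star
  -- geoMean A B is PSD
  have hG : (geoMean A B).PosSemidef := by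
    have hSBS : ((matSqrt A)⁻¹ * B * (matSqrt A)⁻¹).PosSemidef := by
      have h := hB.posSemidef.conjTranspose_mul_mul_same (B := (matSqrt A)⁻¹)
      rwa [conjTranspose_nonsing_inv, matSqrt_herm hA.posSemidef] at h
    have h := (matSqrt_posSemidef hSBS).mul_mul_conjTranspose_same (matSqrt A)
    rwa [matSqrt_herm hA.posSemidef] at h
  have hX : (Mᴴ * geoMean A B * M).PosSemidef := hG.conjTranspose_mul_mul_same M
  have hric : geoMean A B * A⁻¹ * geoMean A B = B := geoMean_riccati hA hB
  symm
  refine eq_geoMean_of_riccati hA' hB' hX ?_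
  set G := geoMean A B with hGdef
  rw [Matrix.mul_inv_rev, Matrix.mul_inv_rev, ← hric]
  simp only [Matrix.mul_assoc, Matrix.mul_nonsing_inv_cancel_left _ _ hM,
    Matrix.nonsing_inv_mul_cancel_left _ _ hMH]
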